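/- arXiv:math/0503519 — 2 statements merged into one kernel-verified Lean document; each statement's English description precedes it below -/
import Mathlib

section
/- Fix a real $u \le 0$. Define $\beta_m(u)$ for $m \geq 0$ by $\beta_0(u) = e^{u/2}$ and $\frac{d\beta_m}{du} = \frac{1}{2}(\beta_{m-1}(u) + e^{u/2}\gamma_{m-1}(u))$ with $\beta_m(0) = 1$, where $\gamma_m(u) = \frac{1}{2}\frac{u^{m+1}}{(m+1)!} + \sum_{n=0}^{m}\frac{u^n}{n!}$. Then $\beta_m(u) = \frac{1}{2}\left(1 + \sum_{n=0}^{m}\frac{u^n}{n!}\right)e^{u/2}$. -/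
/-- If `β₀(u) = e^{u/2}`, `dβ_m/du = (β_{m-1} + e^{u/2} γ_{m-1})/2` with
`β_m(0) = 1` for `m ≥ 1`, where `γ_m(u) = u^{m+1}/(2(m+1)!) + ∑_{n≤m} u^n/n!`,
then `β_m(u) = (1 + ∑_{n≤m} u^n/n!) e^{u/2} / 2`. -/
theorem stmt8 (B : ℕ → ℝ → ℝ)
    (h0 : ∀ u : ℝ, B 0 u = Real.exp (u / 2))
    (hderiv : ∀ m : ℕ, ∀ u : ℝ, HasDerivAt (B (m + 1))
      ((B m u + Real.exp (u / 2) *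
        (u ^ (m + 1) / (2 * ((m + 1).factorial : ℝ))
          + ∑ n ∈ Finset.range (m + 1), u ^ n / (n.factorial : ℝ))) / 2) u)
    (hinit : ∀ m : ℕ, B (m + 1) 0 = 1) :
    ∀ u : ℝ, u ≤ 0 → ∀ m : ℕ,
      B m u = (1 + ∑ n ∈ Finset.range (m + 1), u ^ n / (n.factorial : ℝ))
        * Real.exp (u / 2) / 2 := by
  suffices key : ∀ m : ℕ, ∀ u : ℝ,
      B m u = (1 + ∑ n ∈ Finset.range (m + 1), u ^ n / (n.factorial : ℝ))
        * Real.exp (u / 2) / 2 by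
    intro u _ m; exact key m u
  intro m
  induction m with
  | zero =>
    intro u
    rw [h0 u]
    simp
    ring
  | succ m ih =>
    set g : ℝ → ℝ := fun u =>
      (1 + ∑ n ∈ Finset.range (m + 2), u ^ n / (n.factorial : ℝ)) * Real.exp (u / 2) / 2
      with hgdef
    have hgderiv : ∀ u : ℝ, HasDerivAt g
        ((B m u + Real.exp (u / 2) *
          (u ^ (m + 1) / (2 * ((m + 1).factorial : ℝ))
            + ∑ n ∈ Finset.range (m + 1), u ^ n / (n.factorial : ℝ))) / 2) u := by
      intro u
      have hsum : HasDerivAt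
          (fun u : ℝ => ∑ n ∈ Finset.range (m + 2), u ^ n / (n.factorial : ℝ))
          (∑ n ∈ Finset.range (m + 1), u ^ n / (n.factorial : ℝ)) u := by
        have h1 : HasDerivAt
            (fun u : ℝ => ∑ n ∈ Finset.range (m + 2), u ^ n / (n.factorial : ℝ))
            (∑ n ∈ Finset.range (m + 2), (n : ℝ) * u ^ (n - 1) / (n.factorial : ℝ)) u := by
          apply HasDerivAt.fun_sum
          intro n _
          exact (hasDerivAt_pow n u).div_const _
        convert h1 using 1
        conv_rhs => rw [Finset.sum_range_succ']
        simp only [Nat.cast_zero, zero_mul, zero_div, add_zero]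
        apply Finset.sum_congr rfl
        intro n _
        simp only [Nat.add_sub_cancel]
        rw [Nat.factorial_succ]
        push_cast
        have hfac : ((n.factorial : ℝ)) ≠ 0 := by
          exact_mod_cast Nat.factorial_ne_zero n
        field_simp
      have hexp : HasDerivAt (fun u : ℝ => Real.exp (u / 2)) (Real.exp (u / 2) / 2) u := by
        have := ((hasDerivAt_id u).div_const 2).exp
        simpa [div_eq_mul_inv] using this
      have hconst : HasDerivAt
          (fun u : ℝ => (1 : ℝ) + ∑ n ∈ Finset.range (m + 2), u ^ n / (n.factorial : ℝ))
          (∑ n ∈ Finset.range (m + 1), u ^ n / (n.factorial : ℝ)) u := by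
        simpa using hsum.const_add 1
      have hmul := (hconst.mul hexp).div_const 2
      refine hmul.congr_deriv ?_
      rw [Finset.sum_range_succ (fun n => u ^ n / (n.factorial : ℝ)) (m + 1), ih u]
      ring
    have hdiff : ∀ u : ℝ, HasDerivAt (fun u => B (m + 1) u - g u) 0 u := by
      intro u
      have := ((hderiv m u).sub (hgderiv u)).congr_deriv (sub_self _)
      exact this
    have hc : ∀ u : ℝ, B (m + 1) u - g u = B (m + 1) 0 - g 0 := by
      intro u
      have hdiffable : Differentiable ℝ (fun u => B (m + 1) u - g u) :=
        fun x => (hdiff x).differentiableAt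
      have hz : ∀ x, deriv (fun u => B (m + 1) u - g u) x = 0 :=
        fun x => (hdiff x).deriv
      exact is_const_of_deriv_eq_zero hdiffable hz u 0
    intro u
    have hcu := hc u
    have hg0 : g 0 = 1 := by
      have hs : ∑ n ∈ Finset.range (m + 2), (0 : ℝ) ^ n / (n.factorial : ℝ) = 1 := by
        rw [Finset.sum_range_succ']
        simp
      simp [hgdef, hs]
    rw [hinit m, hg0] at hcu
    have : B (m + 1) u = g u := by linarith
    simpa [hgdef] using this
end

section
/- Let $a, b, c$ be real constants with $c \neq 0$, and suppose $(\beta_m)_{m \geq 1}$ are real functions of $v$ satisfying $\beta_1(v) = a - b e^{v/c}$, $\frac{d\beta_m}{dv} = \beta_{m-1}$ for $m \geq 2$, and $\beta_m(0) = 1$ for all $m \geq 2$ (with $a - b = 1$). Then $\beta_m(v) = \frac{a v^{m-1}}{(m-1)!} + \sum_{j=0}^{m-2}\frac{v^j}{j!} - b c^{m-1}\sum_{j=m-1}^{\infty}\frac{(v/c)^j}{j!}$ for all $m \geq 1$. -/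
open Finset

private lemma exp_tail (x : ℝ) (n : ℕ) :
    (∑' j : ℕ, x ^ (j + n) / ((j + n).factorial : ℝ))
      = Real.exp x - ∑ j ∈ Finset.range n, x ^ j / (j.factorial : ℝ) := by
  have hs := Real.summable_pow_div_factorial x
  have h := Summable.sum_add_tsum_nat_add n hs
  have hexp : Real.exp x = ∑' j : ℕ, x ^ j / (j.factorial : ℝ) := by
    rw [Real.exp_eq_exp_ℝ, NormedSpace.exp_eq_tsum_div]
  rw [hexp]
  linarith [h]

private lemma hP (n : ℕ) (v : ℝ) :
    HasDerivAt (fun v : ℝ => ∑ j ∈ Finset.range (n + 1), v ^ j / (j.factorial : ℝ))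
      (∑ j ∈ Finset.range n, v ^ j / (j.factorial : ℝ)) v := by
  have heq : (fun v : ℝ => ∑ j ∈ Finset.range (n + 1), v ^ j / (j.factorial : ℝ))
      = fun v : ℝ => (∑ j ∈ Finset.range n, v ^ (j + 1) / ((j + 1).factorial : ℝ)) + 1 := by
    funext v
    rw [Finset.sum_range_succ']
    simp
  rw [heq]
  have h : ∀ j ∈ Finset.range n,
      HasDerivAt (fun v : ℝ => v ^ (j + 1) / ((j + 1).factorial : ℝ))
        (v ^ j / (j.factorial : ℝ)) v := by
    intro j _
    have := (hasDerivAt_pow (j + 1) v).div_const ((j + 1).factorial : ℝ)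
    convert this using 1
    · rfl
    · rfl
    rw [Nat.factorial_succ]
    push_cast
    have hj : ((j.factorial : ℝ)) ≠ 0 := by positivity
    field_simp
  exact (HasDerivAt.fun_sum h).add_const 1

/-- General solution of the hierarchy `β₁(v) = a - b e^{v/c}`, `dβ_m/dv = β_{m-1}`,
`β_m(0) = 1` (`m ≥ 2`), with `a - b = 1`:
`β_m(v) = a v^{m-1}/(m-1)! + ∑_{j=0}^{m-2} v^j/j! - b c^{m-1} ∑_{j≥m-1} (v/c)^j/j!`. -/
theorem stmt11 (a b c : ℝ) (hc : c ≠ 0) (hab : a - b = 1) (B : ℕ → ℝ → ℝ)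
    (h1 : ∀ v : ℝ, B 1 v = a - b * Real.exp (v / c))
    (hderiv : ∀ m : ℕ, 2 ≤ m → ∀ v : ℝ, HasDerivAt (B m) (B (m - 1) v) v)
    (hinit : ∀ m : ℕ, 2 ≤ m → B m 0 = 1) :
    ∀ m : ℕ, 1 ≤ m → ∀ v : ℝ,
      B m v = a * v ^ (m - 1) / ((m - 1).factorial : ℝ)
        + ∑ j ∈ Finset.range (m - 1), v ^ j / (j.factorial : ℝ)
        - b * c ^ (m - 1) *
            ∑' j : ℕ, (v / c) ^ (j + (m - 1)) / ((j + (m - 1)).factorial : ℝ) := by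
  -- closed form
  set G : ℕ → ℝ → ℝ := fun n v =>
    a * v ^ n / (n.factorial : ℝ) + ∑ j ∈ Finset.range n, v ^ j / (j.factorial : ℝ)
      - b * c ^ n * Real.exp (v / c)
      + b * c ^ n * ∑ j ∈ Finset.range n, (v / c) ^ j / (j.factorial : ℝ) with hG
  have hGderiv : ∀ n : ℕ, ∀ v : ℝ, HasDerivAt (G (n + 1)) (G n v) v := by
    intro n v
    have h1' : HasDerivAt (fun v : ℝ => a * v ^ (n + 1) / ((n + 1).factorial : ℝ))
        (a * v ^ n / (n.factorial : ℝ)) v := by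
      have := (((hasDerivAt_pow (n + 1) v).const_mul a).div_const ((n + 1).factorial : ℝ))
      convert this using 1
      · rfl
      · rfl
      rw [Nat.factorial_succ]
      push_cast
      have hj : ((n.factorial : ℝ)) ≠ 0 := by positivity
      field_simp
    have h2' := hP n v
    have hvc : HasDerivAt (fun v : ℝ => v / c) (1 / c) v := by
      simpa using (hasDerivAt_id v).div_const c
    have h3' : HasDerivAt (fun v : ℝ => b * c ^ (n + 1) * Real.exp (v / c))
        (b * c ^ n * Real.exp (v / c)) v := by
      have := ((Real.hasDerivAt_exp (v / c)).comp v hvc).const_mul (b * c ^ (n + 1))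
      convert this using 1
      · rfl
      · rfl
      · rfl
      field_simp
      ring
    have h4' : HasDerivAt (fun v : ℝ => b * c ^ (n + 1) *
          ∑ j ∈ Finset.range (n + 1), (v / c) ^ j / (j.factorial : ℝ))
        (b * c ^ n * ∑ j ∈ Finset.range n, (v / c) ^ j / (j.factorial : ℝ)) v := by
      have := ((hP n (v / c)).comp v hvc).const_mul (b * c ^ (n + 1))
      convert this using 1
      · rfl
      · rfl
      · rfl
      field_simp
      ring
    simpa [hG] using ((h1'.fun_add h2').fun_sub h3').fun_add h4'
  have hGmain : ∀ n : ℕ, ∀ v : ℝ, B (n + 1) v = G n v := by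
    intro n
    induction n with
    | zero =>
      intro v
      simp [hG, h1 v]
    | succ n ih =>
      have hd : ∀ v : ℝ, HasDerivAt (fun v => B (n + 2) v - G (n + 1) v) 0 v := by
        intro v
        have hB := hderiv (n + 2) (by omega) v
        simp only [show n + 2 - 1 = n + 1 from rfl] at hB
        have := hB.fun_sub (hGderiv n v)
        simpa [ih v] using this
      have hconst : ∀ v : ℝ, B (n + 2) v - G (n + 1) v = B (n + 2) 0 - G (n + 1) 0 := by
        intro v
        have := is_const_of_deriv_eq_zero (f := fun v => B (n + 2) v - G (n + 1) v)
          (fun x => (hd x).differentiableAt) (fun x => (hd x).deriv) v 0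
        exact this
      intro v
      have hB0 := hinit (n + 2) (by omega)
      have hG0 : G (n + 1) 0 = 1 := by
        simp [hG, Finset.sum_range_succ']
      have := hconst v
      rw [hB0, hG0] at this
      linarith
  intro m hm v
  obtain ⟨n, rfl⟩ := Nat.exists_eq_add_of_le hm
  have hred : 1 + n - 1 = n := by omega
  rw [hred]
  rw [show (1 + n) = n + 1 by omega] at *
  rw [hGmain n v, exp_tail (v / c) n, hG]
  ring
end
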